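/- (Theorem 2, emergence of spin) Define the average angular momentum over one period by σ := (1/16)·Σ_{n=4q}^{4q+3} Σ_{j=1}^{4} r^j_n ∧ p^j_n. Then, with r̃ := (1/4)·Σ_{n=4q}^{4q+3} r̃_n, one has σ = m·(r̃ ∧ ṽ) − ℏ/2 when s = s⁺, and σ = m·(r̃ ∧ ṽ) + ℏ/2 when s = s⁻. Thus the extended particle has intrinsic angular momentum s_z = −ℏ/2 for s⁺ and s_z = +ℏ/2 for s⁻, for every ε > 0. -/

import Mathlib

noncomputable section

open Finset

/-- The four vertices of the unit square in `ℝ²`. -/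
def uR : Fin 4 → EuclideanSpace ℝ (Fin 2) :=
  ![(WithLp.equiv 2 (Fin 2 → ℝ)).symm ![1, 1],
    (WithLp.equiv 2 (Fin 2 → ℝ)).symm ![1, -1],
    (WithLp.equiv 2 (Fin 2 → ℝ)).symm ![-1, -1],
    (WithLp.equiv 2 (Fin 2 → ℝ)).symm ![-1, 1]]

/-- `sPlusIter n j = (s⁺)ⁿ u^j` for the cyclic permutation `s⁺` with
`s⁺u¹ = u², s⁺u² = u³, s⁺u³ = u⁴, s⁺u⁴ = u¹`. -/
def sPlusIter (n : ℕ) (j : Fin 4) : EuclideanSpace ℝ (Fin 2) := uR (j + Fin.ofNat 4 n)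

/-- `sMinusIter n j = (s⁻)ⁿ u^j` for the inverse permutation `s⁻`. -/
def sMinusIter (n : ℕ) (j : Fin 4) : EuclideanSpace ℝ (Fin 2) := uR (j - Fin.ofNat 4 n)

/-- Planar wedge product `a ∧ b = a_x b_y − a_y b_x`. -/
def wedge (a b : EuclideanSpace ℝ (Fin 2)) : ℝ := a 0 * b 1 - a 1 * b 0

set_option maxHeartbeats 4000000 in
/-- Theorem 2, emergence of spin: the average angular momentum
`σ = (1/16) Σ_{n=4q}^{4q+3} Σ_j r^j_n ∧ p^j_n` over one period equals
`m (r̃ ∧ ṽ) − ℏ/2` for `s = s⁺` and `m (r̃ ∧ ṽ) + ℏ/2` for `s = s⁻`,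
where `r̃ = (1/4) Σ_{n=4q}^{4q+3} r̃_n`. -/
theorem emergence_of_spin
    (ℏ m ε : ℝ) (hℏ : 0 < ℏ) (hm : 0 < m) (hε : 0 < ε)
    (q : ℕ) (vt rt0 : EuclideanSpace ℝ (Fin 2))
    (rt : ℕ → EuclideanSpace ℝ (Fin 2))
    (hrt : ∀ n, rt n = rt0 + ((n : ℝ) * ε) • vt)
    (rP rM pP pM : Fin 4 → ℕ → EuclideanSpace ℝ (Fin 2))
    (hrP : ∀ j n, rP j n = rt n + Real.sqrt (ℏ * ε / (4 * m)) • (sPlusIter n j - uR j))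
    (hrM : ∀ j n, rM j n = rt n + Real.sqrt (ℏ * ε / (4 * m)) • (sMinusIter n j - uR j))
    (hpP : ∀ j n, pP j n = (m / ε) • (rP j (n + 1) - rP j n))
    (hpM : ∀ j n, pM j n = (m / ε) • (rM j (n + 1) - rM j n))
    (rbar : EuclideanSpace ℝ (Fin 2))
    (hrbar : rbar = (1 / 4 : ℝ) • ∑ k ∈ Finset.range 4, rt (4 * q + k)) :
    (1 / 16 : ℝ) * ∑ k ∈ Finset.range 4, ∑ j : Fin 4,
        wedge (rP j (4 * q + k)) (pP j (4 * q + k))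
      = m * wedge rbar vt - ℏ / 2
    ∧ (1 / 16 : ℝ) * ∑ k ∈ Finset.range 4, ∑ j : Fin 4,
        wedge (rM j (4 * q + k)) (pM j (4 * q + k))
      = m * wedge rbar vt + ℏ / 2 := by

  have hnn : (0:ℝ) ≤ ℏ * ε / (4 * m) := by positivity
  have hc2 : Real.sqrt (ℏ * ε / (4 * m)) ^ 2 = ℏ * ε / (4 * m) := Real.sq_sqrt hnn
  have h4q : ∀ k, Fin.ofNat 4 (4 * q + k) = Fin.ofNat 4 k := by
    intro k
    apply Fin.ext
    simp only [Fin.val_ofNat]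
    omega
  have h4q' : ∀ k, Fin.ofNat 4 (4 * q + k + 1) = Fin.ofNat 4 (k + 1) := by
    intro k
    apply Fin.ext
    simp only [Fin.val_ofNat]
    omega
  constructor <;>
  · simp only [hrbar, Finset.sum_range_succ, Finset.sum_range_zero, Fin.sum_univ_four,
      hrP, hrM, hpP, hpM, hrt, sPlusIter, sMinusIter, Nat.cast_add, Nat.cast_mul,
      Nat.cast_ofNat, Nat.cast_one, Nat.cast_zero, h4q, h4q', wedge, uR,
      show Fin.ofNat 4 (0 + 1) = 1 from rfl, show Fin.ofNat 4 (1 + 1) = 2 from rfl,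
      show Fin.ofNat 4 (2 + 1) = 3 from rfl, show Fin.ofNat 4 (3 + 1) = 0 from rfl,
      show Fin.ofNat 4 0 = 0 from rfl, show Fin.ofNat 4 1 = 1 from rfl,
      show Fin.ofNat 4 2 = 2 from rfl, show Fin.ofNat 4 3 = 3 from rfl]
    simp [Matrix.cons_val_zero, Matrix.cons_val_one, Matrix.head_cons,
      Matrix.cons_val_two, Matrix.tail_cons, Matrix.cons_val_three,
      WithLp.equiv_symm_apply, PiLp.toLp_apply, PiLp.add_apply, PiLp.sub_apply, PiLp.smul_apply,
      smul_eq_mul, -one_div,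
      show ((-1:Fin 4)) = 3 from rfl, show ((-2:Fin 4)) = 2 from rfl,
      show ((-3:Fin 4)) = 1 from rfl]
    ring_nf
    rw [show ε * ℏ * m⁻¹ * (1 / 4) = ℏ * ε / (4 * m) by ring, hc2]
    field_simp
    ring
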